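/- Let L be a partial group which is the internal semidirect product of partial subgroups X and N. Then: (a) (x,n) and (n,x) belong to D(L) for all x ∈ X, n ∈ N; (b) L = XN and X ∩ N = {1}; (c) Π(x,n)^{-1} = Π(x^{-1}, (n^{-1})^{x^{-1}}) and Π(n,x) = Π(x, n^x) for all x ∈ X, n ∈ N; (d) N is a partial normal subgroup of L. -/

import Mathlib

universe u v

/-- A partial group: a set `L` with a domain `D ⊆ W(L)` of words, a (total extension of the)
partial product `Pi`, and an involutory inversion, satisfying axioms (PG1)-(PG4).
The value of `Pi` outside `D` is irrelevant. -/
structure PartialGroup (L : Type u) : Type u where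
  D : Set (List L)
  Pi : List L → L
  inv : L → L
  inv_inv : ∀ g, inv (inv g) = g
  singleton_mem : ∀ g, [g] ∈ D
  append_left_mem : ∀ {u v : List L}, u ++ v ∈ D → u ∈ D
  append_right_mem : ∀ {u v : List L}, u ++ v ∈ D → v ∈ D
  Pi_singleton : ∀ g, Pi [g] = g
  pg3_mem : ∀ u v w : List L, u ++ v ++ w ∈ D → u ++ [Pi v] ++ w ∈ D
  pg3_eq : ∀ u v w : List L, u ++ v ++ w ∈ D → Pi (u ++ v ++ w) = Pi (u ++ [Pi v] ++ w)
  pg4_mem : ∀ w ∈ D, (List.map inv w).reverse ++ w ∈ D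
  pg4_eq : ∀ w ∈ D, Pi ((List.map inv w).reverse ++ w) = Pi []

namespace PartialGroup

variable {L : Type u} {L' : Type v}

/-- Inversion of a word: `(g_1,...,g_k)⁻¹ = (g_k⁻¹,...,g_1⁻¹)`. -/
def wInv (P : PartialGroup L) (w : List L) : List L := (w.map P.inv).reverse

/-- The identity `1 = Π(∅)`. -/
def one (P : PartialGroup L) : L := P.Pi []

/-- Conjugation `x^g = Π(g⁻¹, x, g)`. -/
def cnj (P : PartialGroup L) (g x : L) : L := P.Pi [P.inv g, x, g]

/-- `x ∈ D(g)`, i.e. `(g⁻¹, x, g) ∈ D(L)`. -/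
def memD (P : PartialGroup L) (g x : L) : Prop := [P.inv g, x, g] ∈ P.D

/-- `H` is a partial subgroup of `L`. -/
def IsPartialSubgroup (P : PartialGroup L) (H : Set L) : Prop :=
  H.Nonempty ∧ (∀ g ∈ H, P.inv g ∈ H) ∧ ∀ w ∈ P.D, (∀ x ∈ w, x ∈ H) → P.Pi w ∈ H

/-- `N` is a partial normal subgroup of `L`. -/
def IsPartialNormal (P : PartialGroup L) (N : Set L) : Prop :=
  P.IsPartialSubgroup N ∧ ∀ g : L, ∀ n ∈ N, P.memD g n → P.cnj g n ∈ N

/-- `H` is a subgroup of `L`: a partial subgroup with `W(H) ⊆ D(L)`. -/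
def IsSubgroup (P : PartialGroup L) (H : Set L) : Prop :=
  P.IsPartialSubgroup H ∧ ∀ w : List L, (∀ x ∈ w, x ∈ H) → w ∈ P.D

/-- Homomorphism of partial groups. -/
def IsHom (P : PartialGroup L) (P' : PartialGroup L') (φ : L → L') : Prop :=
  ∀ w ∈ P.D, w.map φ ∈ P'.D ∧ φ (P.Pi w) = P'.Pi (w.map φ)

/-- Isomorphism of partial groups: a bijective homomorphism with `D(L)^φ = D(L')`. -/
def IsIso (P : PartialGroup L) (P' : PartialGroup L') (φ : L → L') : Prop :=
  Function.Bijective φ ∧ P.IsHom P' φ ∧ List.map φ '' P.D = P'.D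

end PartialGroup

open PartialGroup

/-- For a list of pairs `((x₁,n₁),...,(xₖ,nₖ))` (with `xᵢ ∈ X`, `nᵢ ∈ N`), the word
`w_N = (n₁^{Π(x₂,...,xₖ)}, n₂^{Π(x₃,...,xₖ)}, ..., nₖ)`. -/
def sdn {L : Type u} (P : PartialGroup L) : List (L × L) → List L
  | [] => []
  | q :: rest => P.cnj (P.Pi (rest.map Prod.fst)) q.2 :: sdn P rest

/-- `L` is the internal semidirect product of the partial subgroup `X` with the partial
subgroup `N`: axioms (SD1), (SD2), (SD3). -/
structure IsIntSemidirect {L : Type u} (P : PartialGroup L) (X N : Set L) : Prop where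
  subX : P.IsPartialSubgroup X
  subN : P.IsPartialSubgroup N
  sd1 : ∀ x ∈ X, (∀ n ∈ N, P.memD x n) ∧ P.cnj x '' N = N
  sd2 : ∀ g : L, ∃! q : L × L, q.1 ∈ X ∧ q.2 ∈ N ∧ [q.1, q.2] ∈ P.D ∧ g = P.Pi [q.1, q.2]
  sd3 : ∀ q : List (L × L), (∀ r ∈ q, r.1 ∈ X ∧ r.2 ∈ N) →
      ((q.map fun r => P.Pi [r.1, r.2]) ∈ P.D ↔
        q.map Prod.fst ∈ P.D ∧ sdn P q ∈ P.D) ∧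
      ((q.map fun r => P.Pi [r.1, r.2]) ∈ P.D →
        P.Pi (q.map fun r => P.Pi [r.1, r.2]) =
          P.Pi [P.Pi (q.map Prod.fst), P.Pi (sdn P q)])

namespace PartialGroup

variable {L : Type u} (P : PartialGroup L)

lemma nil_mem (g : L) : ([] : List L) ∈ P.D :=
  P.append_left_mem (u := []) (v := [g]) (P.singleton_mem g)

lemma Pi_nil : P.Pi [] = P.one := rfl

lemma invg_g_mem (g : L) : [P.inv g, g] ∈ P.D := by
  have := P.pg4_mem [g] (P.singleton_mem g); simpa using this

lemma invg_g_pi (g : L) : P.Pi [P.inv g, g] = P.one := by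
  have := P.pg4_eq [g] (P.singleton_mem g); simpa [one] using this

lemma g_invg_mem (g : L) : [g, P.inv g] ∈ P.D := by
  have := P.invg_g_mem (P.inv g); rwa [P.inv_inv] at this

lemma g_invg_pi (g : L) : P.Pi [g, P.inv g] = P.one := by
  have := P.invg_g_pi (P.inv g); rwa [P.inv_inv] at this

lemma a_one_mem (a : L) : [a, P.one] ∈ P.D := by
  have := P.pg3_mem [a] [] [] (by simpa using P.singleton_mem a)
  simpa [one] using this

lemma a_one_pi (a : L) : P.Pi [a, P.one] = a := by
  have := P.pg3_eq [a] [] [] (by simpa using P.singleton_mem a)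
  simp only [List.append_nil] at this
  rw [show ([a] : List L) ++ [P.Pi []] = [a, P.one] from rfl] at this
  rw [← this, P.Pi_singleton]

lemma one_a_mem (a : L) : [P.one, a] ∈ P.D := by
  have := P.pg3_mem [] [] [a] (by simpa using P.singleton_mem a)
  simpa [one] using this

lemma one_a_pi (a : L) : P.Pi [P.one, a] = a := by
  have := P.pg3_eq [] [] [a] (by simpa using P.singleton_mem a)
  simp only [List.nil_append] at this
  rw [show ([P.Pi []] : List L) ++ [a] = [P.one, a] from rfl] at this
  rw [← this, P.Pi_singleton]

lemma inv_one : P.inv P.one = P.one := by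
  have h1 := P.invg_g_pi P.one
  have h2 := P.a_one_pi (P.inv P.one)
  rw [h1] at h2; exact h2.symm

lemma insert_one_mem (u w : List L) (hd : u ++ w ∈ P.D) : u ++ [P.one] ++ w ∈ P.D := by
  have := P.pg3_mem u [] w (by simpa using hd)
  simpa [one] using this

lemma insert_one_pi (u w : List L) (hd : u ++ w ∈ P.D) :
    P.Pi (u ++ [P.one] ++ w) = P.Pi (u ++ w) := by
  have := P.pg3_eq u [] w (by simpa using hd)
  simp only [List.append_nil, List.nil_append] at this ⊢
  rw [show (u ++ [P.Pi []] ++ w : List L) = u ++ [P.one] ++ w from rfl] at this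
  simpa using this.symm

lemma cnj_one (m : L) : P.cnj P.one m = m := by
  unfold cnj
  rw [P.inv_one]
  have h1 : [P.one, m] ++ [P.one] ++ [] ∈ P.D := by
    apply P.insert_one_mem; simpa using P.one_a_mem m
  have h2 := P.insert_one_pi [P.one, m] [] (by simpa using P.one_a_mem m)
  simp only [List.append_nil] at h2
  rw [show ([P.one, m] ++ [P.one] : List L) = [P.one, m, P.one] from rfl] at h2
  rw [h2, P.one_a_pi]

lemma pi_left_cancel {a b : L} (hd : [a, b] ∈ P.D) :
    P.Pi [P.inv a, P.Pi [a, b]] = b := by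
  have h4 : [P.inv b, P.inv a, a, b] ∈ P.D := by
    have := P.pg4_mem [a, b] hd; simpa using this
  have hm : [P.inv a, a, b] ∈ P.D :=
    P.append_right_mem (u := [P.inv b]) (by simpa using h4)
  have e1 := P.pg3_eq [] [P.inv a, a] [b] (by simpa using hm)
  have e2 := P.pg3_eq [P.inv a] [a, b] [] (by simpa using hm)
  simp only [List.nil_append, List.append_nil] at e1 e2
  rw [show ([P.Pi [P.inv a, a]] ++ [b] : List L) = [P.Pi [P.inv a, a], b] from rfl] at e1
  rw [show ([P.inv a, a] ++ [b] : List L) = [P.inv a, a, b] from rfl] at e1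
  rw [show ([P.inv a] ++ [P.Pi [a, b]] : List L) = [P.inv a, P.Pi [a, b]] from rfl] at e2
  rw [show ([P.inv a] ++ [a, b] : List L) = [P.inv a, a, b] from rfl] at e2
  rw [← e2, e1, P.invg_g_pi, P.one_a_pi]

lemma eq_inv_of_pi_eq_one {a b : L} (hd : [a, b] ∈ P.D) (h1 : P.Pi [a, b] = P.one) :
    b = P.inv a := by
  have := P.pi_left_cancel hd
  rw [h1, P.a_one_pi] at this
  exact this.symm

lemma wInv_mem {w : List L} (hd : w ∈ P.D) : P.wInv w ∈ P.D :=
  P.append_left_mem (P.pg4_mem w hd)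

lemma pi_wInv {w : List L} (hd : w ∈ P.D) : P.Pi (P.wInv w) = P.inv (P.Pi w) := by
  have h4m := P.pg4_mem w hd
  have h4e := P.pg4_eq w hd
  have hm1 : P.wInv w ++ [P.Pi w] ∈ P.D := by
    have := P.pg3_mem (P.wInv w) w [] (by simpa [wInv] using h4m)
    simpa using this
  have e1 : P.Pi (P.wInv w ++ [P.Pi w]) = P.one := by
    have := P.pg3_eq (P.wInv w) w [] (by simpa [wInv] using h4m)
    simp only [List.append_nil] at this
    rw [← this]; exact h4e
  have hm2 : [P.Pi (P.wInv w), P.Pi w] ∈ P.D := by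
    have := P.pg3_mem [] (P.wInv w) [P.Pi w] (by simpa using hm1)
    simpa using this
  have e2 : P.Pi [P.Pi (P.wInv w), P.Pi w] = P.one := by
    have := P.pg3_eq [] (P.wInv w) [P.Pi w] (by simpa using hm1)
    simp only [List.nil_append] at this
    rw [show ([P.Pi (P.wInv w)] ++ [P.Pi w] : List L) = [P.Pi (P.wInv w), P.Pi w] from rfl] at this
    rw [← this]; exact e1
  have := P.eq_inv_of_pi_eq_one hm2 e2
  rw [← P.inv_inv (P.Pi (P.wInv w)), ← this]

lemma cnj_inv {g x : L} (hd : P.memD g x) : P.cnj g (P.inv x) = P.inv (P.cnj g x) := by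
  have := P.pi_wInv (w := [P.inv g, x, g]) hd
  unfold cnj
  rw [← this]
  simp [wInv, P.inv_inv]

end PartialGroup
theorem stmt10 {L : Type u} (P : PartialGroup L) (X N : Set L)
    (h : IsIntSemidirect P X N) :
    (∀ x ∈ X, ∀ n ∈ N, [x, n] ∈ P.D ∧ [n, x] ∈ P.D) ∧
    ((∀ g : L, ∃ x ∈ X, ∃ n ∈ N, g = P.Pi [x, n]) ∧ X ∩ N = {P.one}) ∧
    (∀ x ∈ X, ∀ n ∈ N,
      P.inv (P.Pi [x, n]) = P.Pi [P.inv x, P.cnj (P.inv x) (P.inv n)] ∧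
      P.Pi [n, x] = P.Pi [x, P.cnj x n]) ∧
    P.IsPartialNormal N := by
  obtain ⟨gX, hgX⟩ := h.subX.1
  have heX : P.one ∈ X := h.subX.2.2 [] (P.nil_mem gX) (by simp)
  have heN : P.one ∈ N := h.subN.2.2 [] (P.nil_mem gX) (by simp)
  have hcnjN : ∀ x ∈ X, ∀ n ∈ N, P.cnj x n ∈ N := by
    intro x hx n hn
    exact (h.sd1 x hx).2 ▸ Set.mem_image_of_mem _ hn
  have hinvX : ∀ x ∈ X, P.inv x ∈ X := h.subX.2.1
  have hinvN : ∀ n ∈ N, P.inv n ∈ N := h.subN.2.1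
  -- part (a1)
  have ha1 : ∀ x ∈ X, ∀ n ∈ N, [x, n] ∈ P.D := by
    intro x hx n hn
    have hq : ∀ r ∈ [(x, P.one), (P.one, n)], r.1 ∈ X ∧ r.2 ∈ N := by
      intro r hr
      simp only [List.mem_cons, List.not_mem_nil, or_false] at hr
      rcases hr with rfl | rfl
      · exact ⟨hx, heN⟩
      · exact ⟨heX, hn⟩
    have h3 := (h.sd3 _ hq).1
    have hfst : List.map Prod.fst [(x, P.one), (P.one, n)] = [x, P.one] := rfl
    have hsdn : sdn P [(x, P.one), (P.one, n)] = [P.one, n] := by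
      simp only [sdn, List.map_cons, List.map_nil]
      rw [P.Pi_singleton, P.Pi_nil, P.cnj_one, P.cnj_one]
    have hmap : List.map (fun r => P.Pi [r.1, r.2]) [(x, P.one), (P.one, n)] = [x, n] := by
      simp only [List.map_cons, List.map_nil]
      rw [P.a_one_pi, P.one_a_pi]
    rw [hmap, hfst, hsdn] at h3
    exact h3.mpr ⟨P.a_one_mem x, P.one_a_mem n⟩
  -- part (a2) and (c2)
  have ha2c2 : ∀ x ∈ X, ∀ n ∈ N, [n, x] ∈ P.D ∧ P.Pi [n, x] = P.Pi [x, P.cnj x n] := by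
    intro x hx n hn
    have hq : ∀ r ∈ [(P.one, n), (x, P.one)], r.1 ∈ X ∧ r.2 ∈ N := by
      intro r hr
      simp only [List.mem_cons, List.not_mem_nil, or_false] at hr
      rcases hr with rfl | rfl
      · exact ⟨heX, hn⟩
      · exact ⟨hx, heN⟩
    have h3 := h.sd3 _ hq
    have hfst : List.map Prod.fst [(P.one, n), (x, P.one)] = [P.one, x] := rfl
    have hsdn : sdn P [(P.one, n), (x, P.one)] = [P.cnj x n, P.one] := by
      simp only [sdn, List.map_cons, List.map_nil]
      rw [P.Pi_singleton, P.Pi_nil, P.cnj_one]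
    have hmap : List.map (fun r => P.Pi [r.1, r.2]) [(P.one, n), (x, P.one)] = [n, x] := by
      simp only [List.map_cons, List.map_nil]
      rw [P.a_one_pi, P.one_a_pi]
    rw [hmap, hfst, hsdn] at h3
    have hmem : [n, x] ∈ P.D := h3.1.mpr ⟨P.one_a_mem x, P.a_one_mem (P.cnj x n)⟩
    refine ⟨hmem, ?_⟩
    have heq := h3.2 hmem
    rw [P.one_a_pi, P.a_one_pi] at heq
    exact heq
  -- part (c1)
  have hc1 : ∀ x ∈ X, ∀ n ∈ N,
      P.inv (P.Pi [x, n]) = P.Pi [P.inv x, P.cnj (P.inv x) (P.inv n)] := by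
    intro x hx n hn
    have hx' : P.inv x ∈ X := hinvX x hx
    have hn'N : P.cnj (P.inv x) (P.inv n) ∈ N := hcnjN _ hx' _ (hinvN n hn)
    have hmemD : P.memD (P.inv x) n := (h.sd1 _ hx').1 n hn
    have hn'inv : P.cnj (P.inv x) (P.inv n) = P.inv (P.cnj (P.inv x) n) := P.cnj_inv hmemD
    have hq : ∀ r ∈ [(x, n), (P.inv x, P.cnj (P.inv x) (P.inv n))], r.1 ∈ X ∧ r.2 ∈ N := by
      intro r hr
      simp only [List.mem_cons, List.not_mem_nil, or_false] at hr
      rcases hr with rfl | rfl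
      · exact ⟨hx, hn⟩
      · exact ⟨hx', hn'N⟩
    have h3 := h.sd3 _ hq
    have hfst : List.map Prod.fst [(x, n), (P.inv x, P.cnj (P.inv x) (P.inv n))]
        = [x, P.inv x] := rfl
    have hsdn : sdn P [(x, n), (P.inv x, P.cnj (P.inv x) (P.inv n))]
        = [P.cnj (P.inv x) n, P.cnj (P.inv x) (P.inv n)] := by
      simp only [sdn, List.map_cons, List.map_nil]
      rw [P.Pi_singleton, P.Pi_nil, P.cnj_one]
    have hmap : List.map (fun r => P.Pi [r.1, r.2])
        [(x, n), (P.inv x, P.cnj (P.inv x) (P.inv n))]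
        = [P.Pi [x, n], P.Pi [P.inv x, P.cnj (P.inv x) (P.inv n)]] := rfl
    rw [hmap, hfst, hsdn] at h3
    have hmem2 : [P.cnj (P.inv x) n, P.cnj (P.inv x) (P.inv n)] ∈ P.D := by
      rw [hn'inv]; exact P.g_invg_mem _
    have hmemw := h3.1.mpr ⟨P.g_invg_mem x, hmem2⟩
    have heq := h3.2 hmemw
    have hpi2 : P.Pi [P.cnj (P.inv x) n, P.cnj (P.inv x) (P.inv n)] = P.one := by
      rw [hn'inv]; exact P.g_invg_pi _
    rw [P.g_invg_pi, hpi2, P.one_a_pi] at heq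
    exact (P.eq_inv_of_pi_eq_one hmemw heq).symm
  -- part (b) existence
  have hbex : ∀ g : L, ∃ x ∈ X, ∃ n ∈ N, g = P.Pi [x, n] := by
    intro g
    obtain ⟨⟨x, m⟩, ⟨hx, hm, _, hgeq⟩, _⟩ := h.sd2 g
    exact ⟨x, hx, m, hm, hgeq⟩
  -- part (b) intersection
  have hb2 : X ∩ N = {P.one} := by
    ext g
    simp only [Set.mem_inter_iff, Set.mem_singleton_iff]
    constructor
    · rintro ⟨hgX', hgN⟩
      obtain ⟨q, _, huniq⟩ := h.sd2 g
      have h1 := huniq (g, P.one) ⟨hgX', heN, P.a_one_mem g, (P.a_one_pi g).symm⟩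
      have h2 := huniq (P.one, g) ⟨heX, hgN, P.one_a_mem g, (P.one_a_pi g).symm⟩
      exact congrArg Prod.fst (h1.trans h2.symm)
    · rintro rfl; exact ⟨heX, heN⟩
  -- part (d)
  have hdN : P.IsPartialNormal N := by
    refine ⟨h.subN, ?_⟩
    intro g n hn hDg
    obtain ⟨⟨x, m⟩, ⟨hx, hm, hdxm, hgeq⟩, _⟩ := h.sd2 g
    have hx' : P.inv x ∈ X := hinvX x hx
    have hm' : P.cnj (P.inv x) (P.inv m) ∈ N := hcnjN _ hx' _ (hinvN m hm)
    have hinvg : P.inv g = P.Pi [P.inv x, P.cnj (P.inv x) (P.inv m)] := by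
      rw [hgeq]; exact hc1 x hx m hm
    have hq : ∀ r ∈ [(P.inv x, P.cnj (P.inv x) (P.inv m)), (P.one, n), (x, m)],
        r.1 ∈ X ∧ r.2 ∈ N := by
      intro r hr
      simp only [List.mem_cons, List.not_mem_nil, or_false] at hr
      rcases hr with rfl | rfl | rfl
      · exact ⟨hx', hm'⟩
      · exact ⟨heX, hn⟩
      · exact ⟨hx, hm⟩
    have h3 := h.sd3 _ hq
    have hmap : List.map (fun r => P.Pi [r.1, r.2])
        [(P.inv x, P.cnj (P.inv x) (P.inv m)), (P.one, n), (x, m)]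
        = [P.inv g, n, g] := by
      simp only [List.map_cons, List.map_nil]
      rw [← hinvg, P.one_a_pi, ← hgeq]
    have hfst : List.map Prod.fst
        [(P.inv x, P.cnj (P.inv x) (P.inv m)), (P.one, n), (x, m)]
        = [P.inv x, P.one, x] := rfl
    have hsdn : sdn P [(P.inv x, P.cnj (P.inv x) (P.inv m)), (P.one, n), (x, m)]
        = [P.cnj x (P.cnj (P.inv x) (P.inv m)), P.cnj x n, m] := by
      simp only [sdn, List.map_cons, List.map_nil]
      rw [P.Pi_nil, P.cnj_one, P.one_a_pi, P.Pi_singleton]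
    rw [hmap, hfst, hsdn] at h3
    have hDg' : [P.inv g, n, g] ∈ P.D := hDg
    have hDmem := h3.1.mp hDg'
    have hPiN : P.Pi [P.cnj x (P.cnj (P.inv x) (P.inv m)), P.cnj x n, m] ∈ N := by
      refine h.subN.2.2 _ hDmem.2 ?_
      intro y hy
      simp only [List.mem_cons, List.not_mem_nil, or_false] at hy
      rcases hy with rfl | rfl | rfl
      · exact hcnjN x hx _ hm'
      · exact hcnjN x hx n hn
      · exact hm
    have heq := h3.2 hDg'
    have hPix : P.Pi [P.inv x, P.one, x] = P.one := by
      have h1 := P.insert_one_pi [P.inv x] [x] (by simpa using P.invg_g_mem x)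
      rw [show ([P.inv x] ++ [P.one] ++ [x] : List L) = [P.inv x, P.one, x] from rfl] at h1
      rw [show ([P.inv x] ++ [x] : List L) = [P.inv x, x] from rfl] at h1
      rw [h1, P.invg_g_pi]
    rw [hPix, P.one_a_pi] at heq
    show P.cnj g n ∈ N
    rw [show P.cnj g n = P.Pi [P.inv g, n, g] from rfl, heq]
    exact hPiN
  exact ⟨fun x hx n hn => ⟨ha1 x hx n hn, (ha2c2 x hx n hn).1⟩, ⟨hbex, hb2⟩,
    fun x hx n hn => ⟨hc1 x hx n hn, (ha2c2 x hx n hn).2⟩, hdN⟩
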